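/- The Alexander module of Thompson's quandle P is isomorphic as a ℤ[q^{±1}]-module to ℤ[q^{±1}] ⊕ ℤ[q^{±1}]/(1−q) ≅ ℤ[q^{±1}] ⊕ ℤ. -/

import Mathlib

/-- The Laurent polynomial ring `ℤ[q^{±1}]`. -/
abbrev Rq : Type := LaurentPolynomial ℤ
/-- The variable `q` of `ℤ[q^{±1}]`. -/
noncomputable def qv : Rq := LaurentPolynomial.T 1
/-- The Alexander substitution: `x ▷ y ↦ (1 - q) • x + q • y`, in the free module `Rq²`
on the generators `a`, `b`. -/
noncomputable def aconj (x y : Rq × Rq) : Rq × Rq := (1 - qv) • x + qv • y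
/-- The generator `a` of the Alexander module of Thompson's quandle. -/
noncomputable def aGen : Rq × Rq := (1, 0)
/-- The generator `b` of the Alexander module of Thompson's quandle. -/
noncomputable def bGen : Rq × Rq := (0, 1)
/-- The relations of the Alexander module of Thompson's quandle, obtained from
`a ◃ (a ◃ b) = b ◃ (a ◃ b)` and `a ◃ (a ◃ (a ◃ b)) = b ◃ (a ◃ (a ◃ b))` by the
Alexander substitution. -/
noncomputable def alexRels : Set (Rq × Rq) :=
  { aconj aGen (aconj aGen bGen) - aconj bGen (aconj aGen bGen),
    aconj aGen (aconj aGen (aconj aGen bGen)) - aconj bGen (aconj aGen (aconj aGen bGen)) }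
/-- The Alexander module of Thompson's quandle: the `ℤ[q^{±1}]`-module generated by `a, b`
subject to the Alexander-substituted relations. -/
abbrev AlexanderModule := (Rq × Rq) ⧸ Submodule.span Rq alexRels

noncomputable def vrel : Rq × Rq := (1 - qv, qv - 1)

lemma alexRels_eq : alexRels = {vrel} := by
  have h1 : aconj aGen (aconj aGen bGen) - aconj bGen (aconj aGen bGen) = vrel := by
    simp only [aconj, aGen, bGen, vrel, Prod.smul_mk, smul_eq_mul, Prod.mk_add_mk,
      Prod.mk_sub_mk, Prod.mk.injEq]
    constructor <;> ring
  have h2 : aconj aGen (aconj aGen (aconj aGen bGen)) -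
      aconj bGen (aconj aGen (aconj aGen bGen)) = vrel := by
    simp only [aconj, aGen, bGen, vrel, Prod.smul_mk, smul_eq_mul, Prod.mk_add_mk,
      Prod.mk_sub_mk, Prod.mk.injEq]
    constructor <;> ring
  rw [alexRels, h1, h2]
  simp

noncomputable def φ : Rq →ₐ[ℤ] ℤ := AddMonoidAlgebra.lift ℤ ℤ ℤ 1

lemma φ_T (n : ℤ) : φ (LaurentPolynomial.T n) = 1 := by
  show (AddMonoidAlgebra.lift ℤ ℤ ℤ 1) (AddMonoidAlgebra.single n (1:ℤ)) = 1
  rw [AddMonoidAlgebra.lift_single]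
  simp

lemma φ_C (a : ℤ) : φ (LaurentPolynomial.C a) = a := by
  show (AddMonoidAlgebra.lift ℤ ℤ ℤ 1) (AddMonoidAlgebra.single 0 a) = a
  rw [AddMonoidAlgebra.lift_single]
  simp

lemma one_sub_T_mem (n : ℤ) : (1 - LaurentPolynomial.T n : Rq) ∈ Ideal.span {1 - qv} := by
  induction n using Int.induction_on with
  | zero => simp
  | succ k ih =>
      have h : (LaurentPolynomial.T ((k : ℤ) + 1) : Rq) = LaurentPolynomial.T (k : ℤ) * qv := by
        rw [qv, ← LaurentPolynomial.T_add]
      have : (1 - LaurentPolynomial.T (k + 1 : ℤ) : Rq)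
          = (1 - LaurentPolynomial.T (k : ℤ)) + LaurentPolynomial.T (k : ℤ) * (1 - qv) := by
        linear_combination -h
      rw [this]
      exact add_mem ih (Ideal.mul_mem_left _ _ (Ideal.subset_span rfl))
  | pred k ih =>
      have h : (LaurentPolynomial.T (-(k:ℤ)) : Rq) = LaurentPolynomial.T (-(k:ℤ) - 1) * qv := by
        rw [qv, ← LaurentPolynomial.T_add]; norm_num
      have : (1 - LaurentPolynomial.T (-(k:ℤ) - 1) : Rq)
          = (1 - LaurentPolynomial.T (-(k:ℤ))) - LaurentPolynomial.T (-(k:ℤ) - 1) * (1 - qv) := by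
        linear_combination h
      rw [this]
      exact sub_mem ih (Ideal.mul_mem_left _ _ (Ideal.subset_span rfl))

lemma sub_C_mem (f : Rq) : f - LaurentPolynomial.C (φ f) ∈ Ideal.span {1 - qv} := by
  induction f using LaurentPolynomial.induction_on' with
  | add p q hp hq =>
      have : p + q - LaurentPolynomial.C (φ (p + q))
          = (p - LaurentPolynomial.C (φ p)) + (q - LaurentPolynomial.C (φ q)) := by
        rw [map_add, map_add]; ring
      rw [this]; exact add_mem hp hq
  | C_mul_T n a =>
      have : LaurentPolynomial.C a * LaurentPolynomial.T n -
          LaurentPolynomial.C (φ (LaurentPolynomial.C a * LaurentPolynomial.T n))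
          = - (LaurentPolynomial.C a * (1 - LaurentPolynomial.T n)) := by
        rw [map_mul, φ_T, φ_C, mul_one]; ring
      rw [this]
      exact neg_mem (Ideal.mul_mem_left _ _ (one_sub_T_mem n))

lemma ker_φ : RingHom.ker (φ.toRingHom) = Ideal.span {1 - qv} := by
  apply le_antisymm
  · intro f hf
    have : φ f = 0 := hf
    have h := sub_C_mem f
    rwa [this, map_zero, sub_zero] at h
  · rw [Ideal.span_le]
    rintro x rfl
    show φ (1 - qv) = 0
    rw [map_sub, map_one, qv, φ_T, sub_self]

noncomputable def quotEquivInt : (Rq ⧸ Ideal.span {1 - qv}) ≃+* ℤ :=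
  (Ideal.quotEquivOfEq ker_φ.symm).trans
    (RingHom.quotientKerEquivOfSurjective (f := φ.toRingHom)
      (fun n => ⟨LaurentPolynomial.C n, φ_C n⟩))

/-- The Alexander module of Thompson's quandle is isomorphic as a `ℤ[q^{±1}]`-module to
`ℤ[q^{±1}] ⊕ ℤ[q^{±1}]/(1 - q) ≅ ℤ[q^{±1}] ⊕ ℤ`. -/
theorem alexander_module_thompson :
    Nonempty (AlexanderModule ≃ₗ[Rq] Rq × (Rq ⧸ Ideal.span {1 - qv})) ∧
    Nonempty ((Rq ⧸ Ideal.span {1 - qv}) ≃+ ℤ) := by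
  constructor
  · set I : Ideal Rq := Ideal.span {1 - qv} with hI
    let F : Rq × Rq →ₗ[Rq] Rq × (Rq ⧸ I) :=
      ((LinearMap.fst Rq Rq Rq) + (LinearMap.snd Rq Rq Rq)).prod
        (I.mkQ.comp (LinearMap.fst Rq Rq Rq))
    have hFv : F vrel = 0 := by
      simp only [F, vrel, LinearMap.prod_apply, Function.prod, LinearMap.add_apply,
        LinearMap.fst_apply, LinearMap.snd_apply, LinearMap.comp_apply, Submodule.mkQ_apply,
        Prod.mk_eq_zero]
      constructor
      · ring
      · rw [Submodule.Quotient.mk_eq_zero]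
        exact Ideal.subset_span rfl
    have hle : Submodule.span Rq alexRels ≤ LinearMap.ker F := by
      rw [alexRels_eq, Submodule.span_le, Set.singleton_subset_iff]
      exact hFv
    let G : AlexanderModule →ₗ[Rq] Rq × (Rq ⧸ I) :=
      Submodule.liftQ _ F hle
    have hsurj : Function.Surjective G := by
      intro z
      obtain ⟨s, t⟩ := z
      obtain ⟨t, rfl⟩ := Submodule.mkQ_surjective I t
      exact ⟨Submodule.Quotient.mk (t, s - t), by
        simp [G, F, Submodule.liftQ_apply]⟩
    have hinj : Function.Injective G := by
      rw [← LinearMap.ker_eq_bot, Submodule.ker_liftQ_eq_bot]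
      intro z hz
      obtain ⟨x, y⟩ := z
      simp only [LinearMap.mem_ker, F, LinearMap.prod_apply, Function.prod, LinearMap.add_apply,
        LinearMap.fst_apply, LinearMap.snd_apply, LinearMap.comp_apply, Submodule.mkQ_apply,
        Prod.mk_eq_zero, Submodule.Quotient.mk_eq_zero] at hz
      obtain ⟨hxy, hx⟩ := hz
      rw [Ideal.mem_span_singleton] at hx
      obtain ⟨c, hc⟩ := hx
      rw [alexRels_eq, Submodule.mem_span_singleton]
      refine ⟨c, ?_⟩
      have hy : y = -x := by linear_combination hxy
      rw [vrel, Prod.smul_mk, smul_eq_mul, smul_eq_mul, hc, hy, hc]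
      exact Prod.ext (by ring) (by ring)
    exact ⟨LinearEquiv.ofBijective G ⟨hinj, hsurj⟩⟩
  · exact ⟨quotEquivInt.toAddEquiv⟩
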